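/- Let Q ∈ ℂ[x][[T₁, T₃, T₅, …]] satisfy Q = −x/2 + ∑_{a ≥ 0} T_{2a+1}·Q^{2a+1}/a!. Then Q also satisfies ∂Q/∂T_{2a+1} = −(2/a!)·Q^{2a+1}·∂Q/∂x for every a ≥ 0. -/

import Mathlib

/- We work in `ℂ[x][[T₁, T₃, T₅, …]]`, modelled as `MvPowerSeries ℕ (Polynomial ℂ)`
where the variable with index `a : ℕ` is `T_{2a+1}`. -/

/-- The series `∑_{a ≥ 0} T_{2a+1}·Q^{2a+1}/a!`, defined coefficientwise. -/
noncomputable def rhsSum (Q : MvPowerSeries ℕ (Polynomial ℂ)) : MvPowerSeries ℕ (Polynomial ℂ) :=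
  fun σ => ∑ a ∈ σ.support,
    Polynomial.C ((a.factorial : ℂ)⁻¹) *
      MvPowerSeries.coeff (R := Polynomial ℂ) (σ - Finsupp.single a 1) (Q ^ (2*a+1))

/-- The formal partial derivative `∂/∂T_{2i+1}`. -/
noncomputable def pd (i : ℕ) (f : MvPowerSeries ℕ (Polynomial ℂ)) :
    MvPowerSeries ℕ (Polynomial ℂ) :=
  fun σ => ((σ i + 1 : ℕ) : Polynomial ℂ) *
    MvPowerSeries.coeff (R := Polynomial ℂ) (σ + Finsupp.single i 1) f

/-- The formal partial derivative `∂/∂x`, acting on coefficients. -/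
noncomputable def dX (f : MvPowerSeries ℕ (Polynomial ℂ)) : MvPowerSeries ℕ (Polynomial ℂ) :=
  fun σ => Polynomial.derivative (MvPowerSeries.coeff (R := Polynomial ℂ) σ f)

open MvPowerSeries

abbrev M := MvPowerSeries ℕ (Polynomial ℂ)

lemma coeff_pd (i : ℕ) (f : M) (σ : ℕ →₀ ℕ) :
    coeff (R := Polynomial ℂ) σ (pd i f) =
      ((σ i + 1 : ℕ) : Polynomial ℂ) * coeff (R := Polynomial ℂ) (σ + Finsupp.single i 1) f := rfl

lemma coeff_dX (f : M) (σ : ℕ →₀ ℕ) :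
    coeff (R := Polynomial ℂ) σ (dX f) =
      Polynomial.derivative (coeff (R := Polynomial ℂ) σ f) := rfl

lemma pd_add (i : ℕ) (f g : M) : pd i (f + g) = pd i f + pd i g := by
  ext σ
  simp [coeff_pd, mul_add, map_add]

lemma dX_add (f g : M) : dX (f + g) = dX f + dX g := by
  ext σ
  simp [coeff_dX, map_add]

lemma pd_C (i : ℕ) (p : Polynomial ℂ) : pd i (C (σ := ℕ) (R := Polynomial ℂ) p) = 0 := by
  ext σ
  rw [coeff_pd, MvPowerSeries.coeff_C]
  rw [if_neg, mul_zero, map_zero]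
  intro h
  have := DFunLike.congr_fun h i
  simp at this

lemma dX_C (p : Polynomial ℂ) :
    dX (C (σ := ℕ) (R := Polynomial ℂ) p) = C (σ := ℕ) (R := Polynomial ℂ) (Polynomial.derivative p) := by
  ext σ
  rw [coeff_dX, MvPowerSeries.coeff_C, MvPowerSeries.coeff_C]
  split <;> simp

lemma dX_mul (f g : M) : dX (f * g) = dX f * g + f * dX g := by
  classical
  ext σ
  simp only [coeff_dX, map_add, coeff_mul, Polynomial.derivative_sum, Polynomial.derivative_mul,
    ← Finset.sum_add_distrib]

lemma dX_smulC (c : ℂ) (f : M) :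
    dX (C (σ := ℕ) (R := Polynomial ℂ) (Polynomial.C c) * f) = C (σ := ℕ) (R := Polynomial ℂ) (Polynomial.C c) * dX f := by
  rw [dX_mul, dX_C]
  simp

lemma aux_shift (i : ℕ) (σ : ℕ →₀ ℕ) (F : (ℕ →₀ ℕ) → (ℕ →₀ ℕ) → Polynomial ℂ) :
    ∑ p ∈ Finset.HasAntidiagonal.antidiagonal (σ + Finsupp.single i 1),
        (((p.1 : ℕ →₀ ℕ) i : ℕ) : Polynomial ℂ) * F p.1 p.2
    = ∑ q ∈ Finset.HasAntidiagonal.antidiagonal σ,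
        (((q.1 : ℕ →₀ ℕ) i + 1 : ℕ) : Polynomial ℂ) * F (q.1 + Finsupp.single i 1) q.2 := by
  classical
  have hfil : ∀ p ∈ Finset.HasAntidiagonal.antidiagonal (σ + Finsupp.single i 1),
      (((p.1 : ℕ →₀ ℕ) i : ℕ) : Polynomial ℂ) * F p.1 p.2 ≠ 0 → ((p.1 : ℕ →₀ ℕ) i ≠ 0) := by
    intro p _ h hz
    rw [hz] at h
    simp at h
  rw [← Finset.sum_filter_of_ne hfil]
  refine Finset.sum_bij' (fun p _ => (p.1 - Finsupp.single i 1, p.2))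
    (fun q _ => (q.1 + Finsupp.single i 1, q.2)) ?_ ?_ ?_ ?_ ?_
  · intro p hp
    rw [Finset.mem_filter, Finset.HasAntidiagonal.mem_antidiagonal] at hp
    rw [Finset.HasAntidiagonal.mem_antidiagonal]
    obtain ⟨hp1, hp2⟩ := hp
    ext a
    have h1 := DFunLike.congr_fun hp1 a
    simp only [Finsupp.coe_add, Pi.add_apply, Finsupp.coe_tsub, Pi.sub_apply,
      Finsupp.single_apply] at h1 ⊢
    by_cases h : i = a
    · subst h; simp at h1 ⊢; omega
    · simp [h] at h1 ⊢; omega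
  · intro q hq
    rw [Finset.HasAntidiagonal.mem_antidiagonal] at hq
    show (q.1 + Finsupp.single i 1, q.2) ∈ _
    rw [Finset.mem_filter, Finset.HasAntidiagonal.mem_antidiagonal]
    refine ⟨?_, by simp⟩
    rw [add_right_comm, hq]
  · intro p hp
    rw [Finset.mem_filter] at hp
    have hle : Finsupp.single i 1 ≤ p.1 := by
      rw [Finsupp.single_le_iff]
      omega
    dsimp only
    rw [Prod.ext_iff]
    exact ⟨tsub_add_cancel_of_le hle, rfl⟩
  · intro q hq
    dsimp only
    rw [Prod.ext_iff]
    exact ⟨add_tsub_cancel_right _ _, rfl⟩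
  · intro p hp
    rw [Finset.mem_filter] at hp
    have hle : Finsupp.single i 1 ≤ p.1 := by
      rw [Finsupp.single_le_iff]
      omega
    have h1 : p.1 - Finsupp.single i 1 + Finsupp.single i 1 = p.1 :=
      tsub_add_cancel_of_le hle
    have h2 : ((p.1 - Finsupp.single i 1 : ℕ →₀ ℕ)) i + 1 = (p.1 : ℕ →₀ ℕ) i := by
      simp only [Finsupp.coe_tsub, Pi.sub_apply, Finsupp.single_eq_same]
      omega
    dsimp only
    rw [h1, h2]

lemma pd_mul (i : ℕ) (f g : M) : pd i (f * g) = pd i f * g + f * pd i g := by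
  classical
  ext σ : 1
  rw [coeff_pd, map_add, coeff_mul, coeff_mul, coeff_mul]
  simp only [coeff_pd]
  have swap_lemma : ∀ (n : ℕ →₀ ℕ) (G : (ℕ →₀ ℕ) × (ℕ →₀ ℕ) → Polynomial ℂ),
      ∑ p ∈ Finset.HasAntidiagonal.antidiagonal n, G p = ∑ p ∈ Finset.HasAntidiagonal.antidiagonal n, G p.swap := by
    intro n G
    conv_lhs => rw [← Finset.HasAntidiagonal.map_swap_antidiagonal (n := n)]
    rw [Finset.sum_map]
    rfl
  rw [Finset.mul_sum]
  have key : ∀ p ∈ Finset.HasAntidiagonal.antidiagonal (σ + Finsupp.single i 1),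
      ((σ i + 1 : ℕ) : Polynomial ℂ) * (coeff (R := Polynomial ℂ) p.1 f * coeff (R := Polynomial ℂ) p.2 g)
      = (((p.1 : ℕ →₀ ℕ) i : ℕ) : Polynomial ℂ)
          * (coeff (R := Polynomial ℂ) p.1 f * coeff (R := Polynomial ℂ) p.2 g)
        + (((p.2 : ℕ →₀ ℕ) i : ℕ) : Polynomial ℂ)
          * (coeff (R := Polynomial ℂ) p.1 f * coeff (R := Polynomial ℂ) p.2 g) := by
    intro p hp
    rw [Finset.HasAntidiagonal.mem_antidiagonal] at hp
    have hi : σ i + 1 = (p.1 : ℕ →₀ ℕ) i + (p.2 : ℕ →₀ ℕ) i := by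
      have h1 := DFunLike.congr_fun hp i
      simp only [Finsupp.coe_add, Pi.add_apply, Finsupp.single_eq_same] at h1
      omega
    rw [hi]
    push_cast
    ring
  rw [Finset.sum_congr rfl key, Finset.sum_add_distrib]
  refine congrArg₂ (fun x y : Polynomial ℂ => x + y) ?_ ?_
  · calc ∑ p ∈ Finset.HasAntidiagonal.antidiagonal (σ + Finsupp.single i 1),
          (((p.1 : ℕ →₀ ℕ) i : ℕ) : Polynomial ℂ)
            * (coeff (R := Polynomial ℂ) p.1 f * coeff (R := Polynomial ℂ) p.2 g)
        = ∑ q ∈ Finset.HasAntidiagonal.antidiagonal σ,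
          (((q.1 : ℕ →₀ ℕ) i + 1 : ℕ) : Polynomial ℂ)
            * (coeff (R := Polynomial ℂ) (q.1 + Finsupp.single i 1) f * coeff (R := Polynomial ℂ) q.2 g) :=
          by exact aux_shift i σ (fun u v => coeff (R := Polynomial ℂ) u f * coeff (R := Polynomial ℂ) v g)
      _ = _ := Finset.sum_congr rfl fun q _ => (mul_assoc _ _ _).symm
  · calc ∑ p ∈ Finset.HasAntidiagonal.antidiagonal (σ + Finsupp.single i 1),
          (((p.2 : ℕ →₀ ℕ) i : ℕ) : Polynomial ℂ)
            * (coeff (R := Polynomial ℂ) p.1 f * coeff (R := Polynomial ℂ) p.2 g)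
        = ∑ p ∈ Finset.HasAntidiagonal.antidiagonal (σ + Finsupp.single i 1),
          (((p.1 : ℕ →₀ ℕ) i : ℕ) : Polynomial ℂ)
            * (coeff (R := Polynomial ℂ) p.2 f * coeff (R := Polynomial ℂ) p.1 g) :=
          by exact swap_lemma _ (fun p => (((p.2 : ℕ →₀ ℕ) i : ℕ) : Polynomial ℂ)
            * (coeff (R := Polynomial ℂ) p.1 f * coeff (R := Polynomial ℂ) p.2 g))
      _ = ∑ q ∈ Finset.HasAntidiagonal.antidiagonal σ,
          (((q.1 : ℕ →₀ ℕ) i + 1 : ℕ) : Polynomial ℂ)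
            * (coeff (R := Polynomial ℂ) q.2 f * coeff (R := Polynomial ℂ) (q.1 + Finsupp.single i 1) g) :=
          by exact aux_shift i σ (fun u v => coeff (R := Polynomial ℂ) v f * coeff (R := Polynomial ℂ) u g)
      _ = ∑ q ∈ Finset.HasAntidiagonal.antidiagonal σ,
          (((q.2 : ℕ →₀ ℕ) i + 1 : ℕ) : Polynomial ℂ)
            * (coeff (R := Polynomial ℂ) q.1 f * coeff (R := Polynomial ℂ) (q.2 + Finsupp.single i 1) g) :=
          by exact (swap_lemma _ (fun q => (((q.2 : ℕ →₀ ℕ) i + 1 : ℕ) : Polynomial ℂ)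
            * (coeff (R := Polynomial ℂ) q.1 f * coeff (R := Polynomial ℂ) (q.2 + Finsupp.single i 1) g))).symm
      _ = _ := Finset.sum_congr rfl fun q _ => mul_left_comm _ _ _

lemma pd_zero (i : ℕ) : pd i (0 : M) = 0 := by
  ext σ : 1
  simp [coeff_pd]

lemma pd_smulC (i : ℕ) (p : Polynomial ℂ) (f : M) :
    pd i (C (σ := ℕ) (R := Polynomial ℂ) p * f) = C (σ := ℕ) (R := Polynomial ℂ) p * pd i f := by
  rw [pd_mul, pd_C]
  simp

lemma pd_X (i b : ℕ) : pd i (X b : M) = if i = b then 1 else 0 := by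
  classical
  ext σ : 1
  rw [coeff_pd, MvPowerSeries.coeff_X]
  by_cases h : i = b
  · subst h
    rw [if_pos rfl]
    by_cases hσ : σ = 0
    · subst hσ
      rw [if_pos (by simp), MvPowerSeries.coeff_one, if_pos rfl]
      simp
    · rw [if_neg (fun hc => hσ (by simpa using add_eq_right.mp hc)),
        MvPowerSeries.coeff_one, if_neg hσ, mul_zero]
  · rw [if_neg h, if_neg, mul_zero, map_zero]
    intro hc
    have h1 := DFunLike.congr_fun hc i
    simp only [Finsupp.coe_add, Pi.add_apply, Finsupp.single_eq_same,
      Finsupp.single_apply] at h1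
    rw [if_neg (fun hb => h hb.symm)] at h1
    omega

lemma dX_X (b : ℕ) : dX (X b : M) = 0 := by
  classical
  ext σ : 1
  rw [coeff_dX, MvPowerSeries.coeff_X]
  split <;> simp

lemma pd_pow (i : ℕ) (f : M) : ∀ n : ℕ,
    pd i (f ^ (n+1)) = ((n+1 : ℕ) : M) * f ^ n * pd i f
  | 0 => by simp
  | n+1 => by
    rw [pow_succ' f (n+1), pd_mul, pd_pow i f n]
    push_cast
    ring

lemma dX_pow (f : M) : ∀ n : ℕ,
    dX (f ^ (n+1)) = ((n+1 : ℕ) : M) * f ^ n * dX f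
  | 0 => by simp
  | n+1 => by
    rw [pow_succ' f (n+1), dX_mul, dX_pow f n]
    push_cast
    ring

lemma pd_sum (i : ℕ) {β : Type} (s : Finset β) (F : β → M) :
    pd i (∑ b ∈ s, F b) = ∑ b ∈ s, pd i (F b) := by
  ext σ : 1
  rw [coeff_pd, map_sum, map_sum, Finset.mul_sum]
  exact Finset.sum_congr rfl fun b _ => rfl

lemma dX_sum {β : Type} (s : Finset β) (F : β → M) :
    dX (∑ b ∈ s, F b) = ∑ b ∈ s, dX (F b) := by
  ext σ : 1
  rw [coeff_dX, map_sum, Polynomial.derivative_sum, map_sum]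
  exact Finset.sum_congr rfl fun b _ => rfl

lemma coeff_X_mul' (b : ℕ) (h : M) (σ : ℕ →₀ ℕ) :
    coeff (R := Polynomial ℂ) σ ((X b : M) * h) =
      if σ b ≠ 0 then coeff (R := Polynomial ℂ) (σ - Finsupp.single b 1) h else 0 := by
  classical
  rw [coeff_mul]
  by_cases hb : σ b ≠ 0
  · rw [if_pos hb]
    have hmem : (Finsupp.single b 1, σ - Finsupp.single b 1) ∈ Finset.HasAntidiagonal.antidiagonal σ := by
      rw [Finset.HasAntidiagonal.mem_antidiagonal]
      exact add_tsub_cancel_of_le (Finsupp.single_le_iff.mpr (by omega))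
    rw [Finset.sum_eq_single_of_mem _ hmem]
    · rw [MvPowerSeries.coeff_X, if_pos rfl, one_mul]
    · rintro ⟨u, v⟩ hmem2 hne
      rw [MvPowerSeries.coeff_X, if_neg, zero_mul]
      intro hu
      apply hne
      rw [Finset.HasAntidiagonal.mem_antidiagonal] at hmem2
      subst hu
      have hv : v = σ - Finsupp.single b 1 := by
        rw [← hmem2, add_comm, add_tsub_cancel_right]
      rw [hv]
  · rw [if_neg hb]
    push_neg at hb
    apply Finset.sum_eq_zero
    rintro ⟨u, v⟩ hp
    rw [Finset.HasAntidiagonal.mem_antidiagonal] at hp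
    rw [MvPowerSeries.coeff_X, if_neg, zero_mul]
    intro hu
    have h1 := DFunLike.congr_fun hp b
    rw [hu] at h1
    simp only [Finsupp.coe_add, Pi.add_apply, Finsupp.single_eq_same] at h1
    omega

lemma coeff_mul_congr (f g h : M) (σ : ℕ →₀ ℕ)
    (H : ∀ τ ≤ σ, coeff (R := Polynomial ℂ) τ f = coeff (R := Polynomial ℂ) τ g) :
    coeff (R := Polynomial ℂ) σ (f * h) = coeff (R := Polynomial ℂ) σ (g * h) := by
  classical
  rw [coeff_mul, coeff_mul]
  refine Finset.sum_congr rfl fun p hp => ?_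
  rw [Finset.HasAntidiagonal.mem_antidiagonal] at hp
  rw [H p.1 (hp ▸ le_self_add)]

lemma coeff_rhsSum (Q : M) (N : Finset ℕ) (τ : ℕ →₀ ℕ) (hτ : τ.support ⊆ N) :
    coeff (R := Polynomial ℂ) τ (rhsSum Q) =
      coeff (R := Polynomial ℂ) τ (∑ b ∈ N,
        C (σ := ℕ) (R := Polynomial ℂ) (Polynomial.C ((b.factorial : ℂ)⁻¹)) * ((X b : M) * Q ^ (2*b+1))) := by
  classical
  rw [map_sum]
  have hL : coeff (R := Polynomial ℂ) τ (rhsSum Q) = ∑ a ∈ τ.support,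
      Polynomial.C ((a.factorial : ℂ)⁻¹) *
        coeff (R := Polynomial ℂ) (τ - Finsupp.single a 1) (Q ^ (2*a+1)) := rfl
  calc coeff (R := Polynomial ℂ) τ (rhsSum Q)
      = ∑ b ∈ τ.support, (if τ b ≠ 0 then
          Polynomial.C ((b.factorial : ℂ)⁻¹) *
            coeff (R := Polynomial ℂ) (τ - Finsupp.single b 1) (Q ^ (2*b+1)) else 0) := by
        rw [hL]
        exact Finset.sum_congr rfl fun b hb => (if_pos (Finsupp.mem_support_iff.mp hb)).symm
    _ = ∑ b ∈ N, (if τ b ≠ 0 then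
          Polynomial.C ((b.factorial : ℂ)⁻¹) *
            coeff (R := Polynomial ℂ) (τ - Finsupp.single b 1) (Q ^ (2*b+1)) else 0) :=
        Finset.sum_subset hτ (fun b _ hb => if_neg (by simpa using hb))
    _ = _ := by
        refine Finset.sum_congr rfl fun b _ => ?_
        rw [MvPowerSeries.coeff_C_mul, coeff_X_mul']
        split_ifs <;> simp

/-- If `Q ∈ ℂ[x][[T₁,T₃,…]]` satisfies `Q = -x/2 + ∑_{a≥0} T_{2a+1}Q^{2a+1}/a!`, then
`∂Q/∂T_{2a+1} = -(2/a!)·Q^{2a+1}·∂Q/∂x` for every `a ≥ 0`. -/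
theorem stmt4 (Q : MvPowerSeries ℕ (Polynomial ℂ))
    (hQ : Q = MvPowerSeries.C (σ := ℕ) (R := Polynomial ℂ) (Polynomial.C (-(2⁻¹ : ℂ)) * Polynomial.X)
      + rhsSum Q) :
    ∀ a : ℕ, pd a Q
      = MvPowerSeries.C (σ := ℕ) (R := Polynomial ℂ) (Polynomial.C (-2 * (a.factorial : ℂ)⁻¹))
          * Q ^ (2*a+1) * dX Q := by
  classical
  intro a
  ext σ : 1
  set Cx : M := C (σ := ℕ) (R := Polynomial ℂ) (Polynomial.C (-(2⁻¹ : ℂ)) * Polynomial.X) with hCx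
  set N : Finset ℕ := (σ + Finsupp.single a 1).support with hN
  have haN : a ∈ N := by
    rw [hN, Finsupp.mem_support_iff]
    simp
  set S₁ : M := ∑ b ∈ N, C (σ := ℕ) (R := Polynomial ℂ) (Polynomial.C ((b.factorial : ℂ)⁻¹))
      * ((X b : M) * Q ^ (2*b+1)) with hS₁
  set W : M := ∑ b ∈ N, C (σ := ℕ) (R := Polynomial ℂ)
      (Polynomial.C (((2*b+1 : ℕ) : ℂ) * (b.factorial : ℂ)⁻¹))
      * ((X b : M) * Q ^ (2*b)) with hW
  have hcastC : ∀ n : ℕ, ((n : ℕ) : M) = C (σ := ℕ) (R := Polynomial ℂ) (Polynomial.C ((n : ℕ) : ℂ)) := by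
    intro n
    rw [map_natCast (Polynomial.C : ℂ →+* Polynomial ℂ), map_natCast]
  have hCCb : ∀ b : ℕ, C (σ := ℕ) (R := Polynomial ℂ)
      (Polynomial.C (((2*b+1 : ℕ) : ℂ) * (b.factorial : ℂ)⁻¹))
      = ((2*b+1 : ℕ) : M) * C (σ := ℕ) (R := Polynomial ℂ) (Polynomial.C ((b.factorial : ℂ)⁻¹)) := by
    intro b
    rw [map_mul, map_mul, hcastC]
  have G1 : pd a S₁ = C (σ := ℕ) (R := Polynomial ℂ) (Polynomial.C ((a.factorial : ℂ)⁻¹)) * Q ^ (2*a+1)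
      + W * pd a Q := by
    rw [hS₁, pd_sum]
    have term : ∀ b ∈ N,
        pd a (C (σ := ℕ) (R := Polynomial ℂ) (Polynomial.C ((b.factorial : ℂ)⁻¹)) * ((X b : M) * Q ^ (2*b+1)))
        = (if a = b then
            C (σ := ℕ) (R := Polynomial ℂ) (Polynomial.C ((b.factorial : ℂ)⁻¹)) * Q ^ (2*b+1) else 0)
          + (C (σ := ℕ) (R := Polynomial ℂ) (Polynomial.C (((2*b+1 : ℕ) : ℂ) * (b.factorial : ℂ)⁻¹))
              * ((X b : M) * Q ^ (2*b))) * pd a Q := by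
      intro b _
      rw [pd_smulC, pd_mul, pd_X, pd_pow a Q (2*b), hCCb]
      split_ifs with h
      · ring
      · ring
    rw [Finset.sum_congr rfl term, Finset.sum_add_distrib]
    refine congrArg₂ (· + ·) ?_ ?_
    · rw [Finset.sum_ite_eq N a
        (fun b => C (σ := ℕ) (R := Polynomial ℂ) (Polynomial.C ((b.factorial : ℂ)⁻¹)) * Q ^ (2*b+1)),
        if_pos haN]
    · rw [hW, Finset.sum_mul]
  have G2 : dX S₁ = W * dX Q := by
    rw [hS₁, dX_sum]
    have term : ∀ b ∈ N,
        dX (C (σ := ℕ) (R := Polynomial ℂ) (Polynomial.C ((b.factorial : ℂ)⁻¹)) * ((X b : M) * Q ^ (2*b+1)))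
        = (C (σ := ℕ) (R := Polynomial ℂ) (Polynomial.C (((2*b+1 : ℕ) : ℂ) * (b.factorial : ℂ)⁻¹))
            * ((X b : M) * Q ^ (2*b))) * dX Q := by
      intro b _
      rw [dX_smulC, dX_mul, dX_X, dX_pow Q (2*b), hCCb]
      ring
    rw [Finset.sum_congr rfl term, hW, Finset.sum_mul]
  have hQτ : ∀ τ : ℕ →₀ ℕ, τ.support ⊆ N →
      coeff (R := Polynomial ℂ) τ Q = coeff (R := Polynomial ℂ) τ (Cx + S₁) := by
    intro τ hτ
    conv_lhs => rw [hQ]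
    rw [map_add, map_add, coeff_rhsSum Q N τ hτ, hS₁]
  have hsub : ∀ τ : ℕ →₀ ℕ, τ ≤ σ → (τ + Finsupp.single a 1).support ⊆ N := by
    intro τ hτ x hx
    rw [hN, Finsupp.mem_support_iff]
    rw [Finsupp.mem_support_iff] at hx
    have h1 := (Finsupp.le_def.mp hτ) x
    simp only [Finsupp.coe_add, Pi.add_apply] at hx ⊢
    omega
  have hsub2 : ∀ τ : ℕ →₀ ℕ, τ ≤ σ → τ.support ⊆ N := by
    intro τ hτ x hx
    rw [hN, Finsupp.mem_support_iff]
    rw [Finsupp.mem_support_iff] at hx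
    have h1 := (Finsupp.le_def.mp hτ) x
    simp only [Finsupp.coe_add, Pi.add_apply]
    omega
  have P1 : ∀ τ ≤ σ, coeff (R := Polynomial ℂ) τ ((1 - W) * pd a Q)
      = coeff (R := Polynomial ℂ) τ
          (C (σ := ℕ) (R := Polynomial ℂ) (Polynomial.C ((a.factorial : ℂ)⁻¹)) * Q ^ (2*a+1)) := by
    intro τ hτ
    have hpd : coeff (R := Polynomial ℂ) τ (pd a Q)
        = coeff (R := Polynomial ℂ) τ
            (C (σ := ℕ) (R := Polynomial ℂ) (Polynomial.C ((a.factorial : ℂ)⁻¹)) * Q ^ (2*a+1)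
              + W * pd a Q) := by
      rw [coeff_pd, hQτ (τ + Finsupp.single a 1) (hsub τ hτ), ← coeff_pd, pd_add, hCx, pd_C,
        zero_add, G1]
    rw [sub_mul, one_mul, map_sub, hpd, map_add]
    ring
  have P2 : ∀ τ ≤ σ, coeff (R := Polynomial ℂ) τ ((1 - W) * dX Q)
      = coeff (R := Polynomial ℂ) τ (C (σ := ℕ) (R := Polynomial ℂ) (Polynomial.C (-(2⁻¹ : ℂ)))) := by
    intro τ hτ
    have hdXCx : dX Cx = C (σ := ℕ) (R := Polynomial ℂ) (Polynomial.C (-(2⁻¹ : ℂ))) := by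
      rw [hCx, dX_C]
      congr 1
      simp
    have hdx : coeff (R := Polynomial ℂ) τ (dX Q)
        = coeff (R := Polynomial ℂ) τ
            (C (σ := ℕ) (R := Polynomial ℂ) (Polynomial.C (-(2⁻¹ : ℂ))) + W * dX Q) := by
      rw [coeff_dX, hQτ τ (hsub2 τ hτ), ← coeff_dX, dX_add, hdXCx, G2]
    rw [sub_mul, one_mul, map_sub, hdx, map_add]
    ring
  have hu : constantCoeff (σ := ℕ) (R := Polynomial ℂ) (1 - W) = 1 := by
    rw [map_sub, map_one, hW, map_sum]
    rw [Finset.sum_eq_zero, sub_zero]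
    intro b _
    simp [map_mul, MvPowerSeries.constantCoeff_X]
  have hE : (1 - W) * MvPowerSeries.invOfUnit (1 - W) 1 = 1 :=
    MvPowerSeries.mul_invOfUnit _ 1 (by rw [hu, Units.val_one])
  set E : M := MvPowerSeries.invOfUnit (1 - W) 1 with hEdef
  have P1' : ∀ τ ≤ σ, coeff (R := Polynomial ℂ) τ (pd a Q)
      = coeff (R := Polynomial ℂ) τ
          ((C (σ := ℕ) (R := Polynomial ℂ) (Polynomial.C ((a.factorial : ℂ)⁻¹)) * Q ^ (2*a+1)) * E) := by
    intro τ hτ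
    have h1 : pd a Q = ((1 - W) * pd a Q) * E := by
      rw [mul_comm (1 - W) (pd a Q), mul_assoc, hE, mul_one]
    rw [congrArg (coeff (R := Polynomial ℂ) τ) h1]
    exact coeff_mul_congr _ _ _ τ (fun u hu' => P1 u (le_trans hu' hτ))
  have P2' : ∀ τ ≤ σ, coeff (R := Polynomial ℂ) τ (dX Q)
      = coeff (R := Polynomial ℂ) τ
          (C (σ := ℕ) (R := Polynomial ℂ) (Polynomial.C (-(2⁻¹ : ℂ))) * E) := by
    intro τ hτ
    have h1 : dX Q = ((1 - W) * dX Q) * E := by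
      rw [mul_comm (1 - W) (dX Q), mul_assoc, hE, mul_one]
    rw [congrArg (coeff (R := Polynomial ℂ) τ) h1]
    exact coeff_mul_congr _ _ _ τ (fun u hu' => P2 u (le_trans hu' hτ))
  have hCCmul : (C (σ := ℕ) (R := Polynomial ℂ) (Polynomial.C (-(2⁻¹ : ℂ))))
      * (C (σ := ℕ) (R := Polynomial ℂ) (Polynomial.C (-2 * (a.factorial : ℂ)⁻¹)))
      = C (σ := ℕ) (R := Polynomial ℂ) (Polynomial.C ((a.factorial : ℂ)⁻¹)) := by
    rw [← map_mul, ← map_mul]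
    congr 2
    rw [show (-(2⁻¹ : ℂ)) * (-2 * (a.factorial : ℂ)⁻¹)
      = (2⁻¹ * 2) * (a.factorial : ℂ)⁻¹ from by ring]
    norm_num
  calc coeff (R := Polynomial ℂ) σ (pd a Q)
      = coeff (R := Polynomial ℂ) σ
          ((C (σ := ℕ) (R := Polynomial ℂ) (Polynomial.C ((a.factorial : ℂ)⁻¹)) * Q ^ (2*a+1)) * E) :=
        P1' σ le_rfl
    _ = coeff (R := Polynomial ℂ) σ
          ((C (σ := ℕ) (R := Polynomial ℂ) (Polynomial.C (-(2⁻¹ : ℂ))) * E)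
            * (C (σ := ℕ) (R := Polynomial ℂ) (Polynomial.C (-2 * (a.factorial : ℂ)⁻¹)) * Q ^ (2*a+1))) :=
        congrArg (coeff (R := Polynomial ℂ) σ) (by rw [← hCCmul]; ring)
    _ = coeff (R := Polynomial ℂ) σ
          ((dX Q) * (C (σ := ℕ) (R := Polynomial ℂ) (Polynomial.C (-2 * (a.factorial : ℂ)⁻¹))
            * Q ^ (2*a+1))) :=
        (coeff_mul_congr _ _ _ σ (fun u hu' => P2' u hu')).symm
    _ = coeff (R := Polynomial ℂ) σ
          (C (σ := ℕ) (R := Polynomial ℂ) (Polynomial.C (-2 * (a.factorial : ℂ)⁻¹)) * Q ^ (2*a+1) * dX Q) :=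
        congrArg (coeff (R := Polynomial ℂ) σ) (by ring)
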